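/- arXiv:2202.09645 — 2 statements merged into one kernel-verified Lean document; each statement's English description precedes it below -/
import Mathlib

section
/- The number 40 is the least positive integer n such that every subgraph G of the complete bipartite graph K_{6,n} contains a copy of K_{2,2} or has a copy of K_{5,5} in its bipartite complement; that is, BR_6(K_{2,2}, K_{5,5}) = 40. -/
/-- A subgraph of the complete bipartite graph `K_{m,n}` is identified with its
edge set, a finset of pairs `(x, y)` with `x` in the part `X = Fin m` and
`y` in the part `Y = Fin n`.  `bContains s t E` says that the bipartite graph
with edge set `E` contains a copy of `K_{s,t}`: there are `s` distinct
vertices of `X` and `t` distinct vertices of `Y` with all pairs present. -/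
def bContains {m n : ℕ} (s t : ℕ) (E : Finset (Fin m × Fin n)) : Prop :=
  ∃ (A : Finset (Fin m)) (B : Finset (Fin n)),
    A.card = s ∧ B.card = t ∧ ∀ x ∈ A, ∀ y ∈ B, (x, y) ∈ E

/-- The bipartite complement: edge set `(X × Y) \ E`. -/
def bCompl {m n : ℕ} (E : Finset (Fin m × Fin n)) : Finset (Fin m × Fin n) :=
  Finset.univ \ E

/-- The neighborhood `N_G(x) ⊆ Y` of a vertex `x ∈ X`. -/
def bNbhd {m n : ℕ} (E : Finset (Fin m × Fin n)) (x : Fin m) : Finset (Fin n) :=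
  Finset.univ.filter (fun y => (x, y) ∈ E)

/-- The degree of a vertex `x ∈ X`. -/
def bDeg {m n : ℕ} (E : Finset (Fin m × Fin n)) (x : Fin m) : ℕ :=
  (bNbhd E x).card

/-- `Δ(G_X)`: the maximum degree over the vertices of the part `X`. -/
def bMaxDegX {m n : ℕ} (E : Finset (Fin m × Fin n)) : ℕ :=
  Finset.univ.sup (fun x => bDeg E x)

open Finset

def paL : List ℕ := [0,0,0,0,0,1,1,1,1,2,2,2,3,3,4]
def pbL : List ℕ := [1,2,3,4,5,2,3,4,5,3,4,5,4,5,5]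

def adjB (x y : ℕ) : Bool :=
  if y < 15 then (x == paL.getD y 0 || x == pbL.getD y 0) else x == (y-15)/4

lemma pa_lt_pb : ∀ y < 15, paL.getD y 0 < pbL.getD y 0 ∧ pbL.getD y 0 < 6 := by decide

lemma pair_inj : ∀ y1 < 15, ∀ y2 < 15,
    paL.getD y1 0 = paL.getD y2 0 → pbL.getD y1 0 = pbL.getD y2 0 → y1 = y2 := by decide

lemma lower (n : ℕ) (hn : n ≤ 39) :
    ∃ E : Finset (Fin 6 × Fin n), ¬ bContains 2 2 E ∧ ¬ bContains 5 5 (bCompl E) := by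
  classical
  refine ⟨Finset.univ.filter (fun p => adjB p.1.val p.2.val = true), ?_, ?_⟩
  · rintro ⟨A, B, hA, hB, hE⟩
    obtain ⟨x1, x2, hx12, rfl⟩ := Finset.card_eq_two.mp hA
    obtain ⟨y1, y2, hy12, rfl⟩ := Finset.card_eq_two.mp hB
    have e : ∀ x ∈ ({x1, x2} : Finset (Fin 6)), ∀ y ∈ ({y1, y2} : Finset (Fin n)),
        adjB x.val y.val = true := by
      intro x hx y hy
      have := hE x hx y hy
      simpa using this
    have e11 := e x1 (by simp) y1 (by simp)
    have e12 := e x1 (by simp) y2 (by simp)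
    have e21 := e x2 (by simp) y1 (by simp)
    have e22 := e x2 (by simp) y2 (by simp)
    by_cases h1 : y1.val < 15
    · by_cases h2 : y2.val < 15
      · simp only [adjB, if_pos h1, if_pos h2, Bool.or_eq_true, beq_iff_eq] at e11 e12 e21 e22
        have P1 := pa_lt_pb y1.val h1
        have P2 := pa_lt_pb y2.val h2
        have hxne : x1.val ≠ x2.val := fun h => hx12 (Fin.ext h)
        have hyne : y1.val ≠ y2.val := fun h => hy12 (Fin.ext h)
        rcases e11 with a11|b11 <;> rcases e21 with a21|b21 <;>
          rcases e12 with a12|b12 <;> rcases e22 with a22|b22 <;>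
        first
        | omega
        | (exact hyne (pair_inj y1.val h1 y2.val h2 (by omega) (by omega)))
      · simp only [adjB, if_neg h2, beq_iff_eq] at e12 e22
        exact hx12 (Fin.ext (e12.trans e22.symm))
    · simp only [adjB, if_neg h1, beq_iff_eq] at e11 e21
      exact hx12 (Fin.ext (e11.trans e21.symm))
  · rintro ⟨A, B, hA, hB, hE⟩
    have hAc : (univ \ A).card = 1 := by
      rw [Finset.card_sdiff_of_subset (Finset.subset_univ A)]
      simp [hA]
    obtain ⟨r, hr⟩ := Finset.card_eq_one.mp hAc
    have hmem : ∀ x : Fin 6, x ≠ r → x ∈ A := by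
      intro x hx
      by_contra hxA
      have : x ∈ univ \ A := by simp [hxA]
      rw [hr] at this
      exact hx (by simpa using this)
    have hNE : ∀ x : Fin 6, x ≠ r → ∀ y ∈ B, ¬ adjB x.val y.val = true := by
      intro x hx y hy hadj
      have h' := hE x (hmem x hx) y hy
      rw [bCompl, Finset.mem_sdiff] at h'
      exact h'.2 (Finset.mem_filter.mpr ⟨Finset.mem_univ _, hadj⟩)
    have hBsub : ∀ y ∈ B, 15 ≤ y.val ∧ (y.val - 15)/4 = r.val := by
      intro y hy
      by_cases h15 : y.val < 15
      · exfalso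
        have P := pa_lt_pb y.val h15
        set a := paL.getD y.val 0 with ha
        set b := pbL.getD y.val 0 with hb
        have hxa : adjB (⟨a, by omega⟩ : Fin 6).val y.val = true := by
          simp only [adjB, if_pos h15, Bool.or_eq_true, beq_iff_eq]
          tauto
        have hxb : adjB (⟨b, by omega⟩ : Fin 6).val y.val = true := by
          simp only [adjB, if_pos h15, Bool.or_eq_true, beq_iff_eq]
          tauto
        by_cases har : (⟨a, by omega⟩ : Fin 6) = r
        · have hbr : (⟨b, by omega⟩ : Fin 6) ≠ r := by
            intro h
            rw [← har] at h
            have := congrArg Fin.val h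
            simp at this
            omega
          exact hNE _ hbr y hy hxb
        · exact hNE _ har y hy hxa
      · have hq : (y.val - 15)/4 < 6 := by
          have : y.val < n := y.isLt
          omega
        have hadj : adjB (⟨(y.val - 15)/4, hq⟩ : Fin 6).val y.val = true := by
          simp [adjB, if_neg h15]
        by_cases hqr : (⟨(y.val - 15)/4, hq⟩ : Fin 6) = r
        · exact ⟨by omega, congrArg Fin.val hqr⟩
        · exact absurd hadj (hNE _ hqr y hy)
    have hcard : B.card ≤ (Finset.Ico (15 + 4*r.val) (19 + 4*r.val)).card := by
      apply Finset.card_le_card_of_injOn (fun y => y.val)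
      · intro y hy
        obtain ⟨h1, h2⟩ := hBsub y hy
        simp only [Finset.mem_coe, Finset.mem_Ico]
        omega
      · intro a _ b _ h
        exact Fin.ext h
    rw [Nat.card_Ico] at hcard
    omega

lemma upper (E : Finset (Fin 6 × Fin 40)) :
    bContains 2 2 E ∨ bContains 5 5 (bCompl E) := by
  classical
  by_cases h22 : bContains 2 2 E
  · exact Or.inl h22
  right
  set colN : Fin 40 → Finset (Fin 6) := fun y => univ.filter (fun x => (x,y) ∈ E) with hcolN
  have hint : ∀ y1 y2 : Fin 40, y1 ≠ y2 → (colN y1 ∩ colN y2).card ≤ 1 := by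
    intro y1 y2 hne
    by_contra h
    push_neg at h
    obtain ⟨T, hT, hTc⟩ := Finset.exists_subset_card_eq (show 2 ≤ (colN y1 ∩ colN y2).card from h)
    apply h22
    refine ⟨T, {y1, y2}, hTc, ?_, ?_⟩
    · rw [Finset.card_insert_of_notMem (by simp [hne]), Finset.card_singleton]
    · intro x hx y hy
      have hx' := hT hx
      rw [Finset.mem_inter] at hx'
      simp only [hcolN, Finset.mem_filter] at hx'
      rcases Finset.mem_insert.mp hy with rfl | hy'
      · exact hx'.1.2
      · rw [Finset.mem_singleton] at hy'
        subst hy'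
        exact hx'.2.2
  have hg : ∀ y : Fin 40, 2 ≤ (colN y).card → ∃ T ⊆ colN y, T.card = 2 :=
    fun y h => Finset.exists_subset_card_eq h
  choose! f hsub hcard2 using hg
  have hHD : (univ.filter (fun y : Fin 40 => 2 ≤ (colN y).card)).card ≤ 15 := by
    have h1 : (univ.filter (fun y : Fin 40 => 2 ≤ (colN y).card)).card ≤
        (Finset.powersetCard 2 (univ : Finset (Fin 6))).card := by
      apply Finset.card_le_card_of_injOn f
      · intro y hy
        rw [Finset.mem_coe, Finset.mem_filter] at hy
        rw [Finset.mem_coe, Finset.mem_powersetCard]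
        exact ⟨Finset.subset_univ _, hcard2 y hy.2⟩
      · intro y1 hy1 y2 hy2 hf
        simp only [Finset.coe_filter, Set.mem_setOf_eq] at hy1 hy2
        by_contra hne
        have hsub2 : f y1 ⊆ colN y1 ∩ colN y2 := by
          apply Finset.subset_inter (hsub y1 hy1.2)
          rw [hf]
          exact hsub y2 hy2.2
        have := Finset.card_le_card hsub2
        rw [hcard2 y1 hy1.2] at this
        have := hint y1 y2 hne
        omega
    rw [Finset.card_powersetCard, Finset.card_univ] at h1
    have h15 : Nat.choose 6 2 = 15 := by decide
    simpa [h15] using h1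
  have hsplit := Finset.card_filter_add_card_filter_not
    (s := (univ : Finset (Fin 40))) (p := fun y => 2 ≤ (colN y).card)
  rw [Finset.card_univ] at hsplit
  simp only [Fintype.card_fin] at hsplit
  have hLD : 25 ≤ (univ.filter (fun y : Fin 40 => ¬ 2 ≤ (colN y).card)).card := by omega
  set Bad : Fin 6 → Finset (Fin 40) :=
    fun r => univ.filter (fun y => ∀ x : Fin 6, x ≠ r → (x,y) ∉ E) with hBad
  have hsubB : univ.filter (fun y : Fin 40 => ¬ 2 ≤ (colN y).card) ⊆ univ.biUnion Bad := by
    intro y hy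
    rw [Finset.mem_filter] at hy
    have hle : (colN y).card ≤ 1 := by omega
    obtain ⟨r, hr⟩ := Finset.card_le_one_iff_subset_singleton.mp hle
    refine Finset.mem_biUnion.mpr ⟨r, Finset.mem_univ r, ?_⟩
    rw [hBad]
    simp only [Finset.mem_filter, Finset.mem_univ, true_and]
    intro x hx hxe
    have hxc : x ∈ colN y := by simp [hcolN, hxe]
    have := hr hxc
    rw [Finset.mem_singleton] at this
    exact hx this
  have hsum : 25 ≤ ∑ r : Fin 6, (Bad r).card := by
    calc 25 ≤ (univ.filter (fun y : Fin 40 => ¬ 2 ≤ (colN y).card)).card := hLD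
    _ ≤ (univ.biUnion Bad).card := Finset.card_le_card hsubB
    _ ≤ ∑ r : Fin 6, (Bad r).card := Finset.card_biUnion_le
  have hex : ∃ r : Fin 6, 5 ≤ (Bad r).card := by
    by_contra hno
    push_neg at hno
    have : ∑ r : Fin 6, (Bad r).card ≤ ∑ _r : Fin 6, 4 :=
      Finset.sum_le_sum (fun r _ => by have := hno r; omega)
    simp at this
    omega
  obtain ⟨r, hr5⟩ := hex
  obtain ⟨B, hBsub, hBc⟩ := Finset.exists_subset_card_eq hr5
  refine ⟨univ.erase r, B, ?_, hBc, ?_⟩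
  · rw [Finset.card_erase_of_mem (Finset.mem_univ r), Finset.card_univ]
    simp
  · intro x hx y hy
    have hxr : x ≠ r := Finset.ne_of_mem_erase hx
    have hyB := hBsub hy
    rw [hBad, Finset.mem_filter] at hyB
    have := hyB.2 x hxr
    simp [bCompl, Finset.mem_sdiff]
    exact this

theorem stmt_4 :
    IsLeast {n : ℕ | 0 < n ∧ ∀ E : Finset (Fin 6 × Fin n),
      bContains 2 2 E ∨ bContains 5 5 (bCompl E)} 40 := by
  constructor
  · exact ⟨by norm_num, upper⟩
  · rintro n ⟨hn0, hn⟩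
    by_contra h
    push_neg at h
    obtain ⟨E, h1, h2⟩ := lower n (by omega)
    rcases hn E with h' | h'
    · exact h1 h'
    · exact h2 h'
end

section
/- The number 30 is the least positive integer n such that every subgraph G of the complete bipartite graph K_{7,n} contains a copy of K_{2,2} or has a copy of K_{5,5} in its bipartite complement, and likewise 30 is the least such integer for K_{8,n}; that is, BR_7(K_{2,2}, K_{5,5}) = BR_8(K_{2,2}, K_{5,5}) = 30. -/
open Finset

def colE {m n : ℕ} (E : Finset (Fin m × Fin n)) (y : Fin n) : Finset (Fin m) :=
  Finset.univ.filter (fun x => (x, y) ∈ E)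

lemma mem_colE {m n : ℕ} {E : Finset (Fin m × Fin n)} {x : Fin m} {y : Fin n} :
    x ∈ colE E y ↔ (x, y) ∈ E := by simp [colE]

lemma mem_bCompl {m n : ℕ} {E : Finset (Fin m × Fin n)} {p : Fin m × Fin n} :
    p ∈ bCompl E ↔ p ∉ E := by simp [bCompl]

lemma bContains_22_iff {m n : ℕ} (E : Finset (Fin m × Fin n)) :
    bContains 2 2 E ↔ ∃ y₁ y₂ : Fin n, y₁ ≠ y₂ ∧ 2 ≤ (colE E y₁ ∩ colE E y₂).card := by
  constructor
  · rintro ⟨A, B, hA, hB, hall⟩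
    obtain ⟨x₁, x₂, hx, rfl⟩ := Finset.card_eq_two.1 hA
    obtain ⟨y₁, y₂, hy, rfl⟩ := Finset.card_eq_two.1 hB
    refine ⟨y₁, y₂, hy, ?_⟩
    have hsub : ({x₁, x₂} : Finset (Fin m)) ⊆ colE E y₁ ∩ colE E y₂ := by
      intro x hx'
      simp only [mem_insert, mem_singleton] at hx'
      simp only [mem_inter, mem_colE]
      rcases hx' with rfl | rfl <;>
        exact ⟨hall _ (by simp) _ (by simp), hall _ (by simp) _ (by simp)⟩
    calc 2 = ({x₁, x₂} : Finset (Fin m)).card := (card_eq_two.2 ⟨x₁, x₂, hx, rfl⟩).symm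
      _ ≤ _ := card_le_card hsub
  · rintro ⟨y₁, y₂, hy, h2⟩
    obtain ⟨P, hPsub, hP⟩ := Finset.exists_subset_card_eq h2
    obtain ⟨x₁, x₂, hx, rfl⟩ := card_eq_two.1 hP
    refine ⟨{x₁, x₂}, {y₁, y₂}, card_eq_two.2 ⟨_, _, hx, rfl⟩, card_eq_two.2 ⟨_, _, hy, rfl⟩, ?_⟩
    intro x hx' y hy'
    simp only [mem_insert, mem_singleton] at hx' hy'
    have hxi : x ∈ colE E y₁ ∩ colE E y₂ := hPsub (by rcases hx' with rfl | rfl <;> simp)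
    rw [mem_inter, mem_colE, mem_colE] at hxi
    rcases hy' with rfl | rfl
    exacts [hxi.1, hxi.2]

lemma coK55_iff {m n : ℕ} (E : Finset (Fin m × Fin n)) :
    bContains 5 5 (bCompl E) ↔ ∃ S : Finset (Fin m), Sᶜ.card = 5 ∧
      5 ≤ ((univ : Finset (Fin n)).filter fun y => colE E y ⊆ S).card := by
  constructor
  · rintro ⟨A, B, hA, hB, hall⟩
    refine ⟨Aᶜ, by simp [hA], ?_⟩
    have hsub : B ⊆ (univ : Finset (Fin n)).filter fun y => colE E y ⊆ Aᶜ := by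
      intro y hy
      simp only [mem_filter, mem_univ, true_and]
      intro x hx
      rw [mem_colE] at hx
      rw [mem_compl]
      intro hxA
      exact (mem_bCompl.1 (hall x hxA y hy)) hx
    calc 5 = B.card := hB.symm
      _ ≤ _ := card_le_card hsub
  · rintro ⟨S, hS, h5⟩
    obtain ⟨B, hBsub, hB⟩ := exists_subset_card_eq h5
    refine ⟨Sᶜ, B, hS, hB, ?_⟩
    intro x hx y hy
    have hcol : colE E y ⊆ S := (mem_filter.1 (hBsub hy)).2
    rw [mem_bCompl]
    intro hE
    exact (mem_compl.1 hx) (hcol (mem_colE.2 hE))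

lemma transfer_22 {m n m' n' : ℕ} (φ : Fin m ↪ Fin m') (ψ : Fin n ↪ Fin n')
    (E' : Finset (Fin m' × Fin n')) {s t : ℕ}
    (h : bContains s t ((univ : Finset (Fin m × Fin n)).filter fun p => (φ p.1, ψ p.2) ∈ E')) :
    bContains s t E' := by
  obtain ⟨A, B, hA, hB, hall⟩ := h
  refine ⟨A.map φ, B.map ψ, by simp [hA], by simp [hB], ?_⟩
  intro x hx y hy
  obtain ⟨x₀, hx₀, rfl⟩ := mem_map.1 hx
  obtain ⟨y₀, hy₀, rfl⟩ := mem_map.1 hy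
  have := hall x₀ hx₀ y₀ hy₀
  exact (mem_filter.1 this).2

lemma transfer_co {m n m' n' : ℕ} (φ : Fin m ↪ Fin m') (ψ : Fin n ↪ Fin n')
    (E' : Finset (Fin m' × Fin n')) {s t : ℕ}
    (h : bContains s t (bCompl ((univ : Finset (Fin m × Fin n)).filter fun p => (φ p.1, ψ p.2) ∈ E'))) :
    bContains s t (bCompl E') := by
  obtain ⟨A, B, hA, hB, hall⟩ := h
  refine ⟨A.map φ, B.map ψ, by simp [hA], by simp [hB], ?_⟩
  intro x hx y hy
  obtain ⟨x₀, hx₀, rfl⟩ := mem_map.1 hx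
  obtain ⟨y₀, hy₀, rfl⟩ := mem_map.1 hy
  have := mem_bCompl.1 (hall x₀ hx₀ y₀ hy₀)
  rw [mem_bCompl]
  intro hE
  exact this (mem_filter.2 ⟨mem_univ _, hE⟩)

def cF (E : Finset (Fin 7 × Fin 30)) (S : Finset (Fin 7)) : ℕ :=
  ((univ : Finset (Fin 30)).filter fun y => colE E y = S).card
section main2
variable (E : Finset (Fin 7 × Fin 30))
local notation "c" => cF E

-- (hc1)
lemma hc1 (L1 : ∀ y₁ y₂ : Fin 30, y₁ ≠ y₂ → ((colE E y₁) ∩ (colE E y₂)).card ≤ 1) : ∀ S : Finset (Fin 7), S.card = 2 → c S ≤ 1 := by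
  intro S hS
  rw [cF, card_le_one]
  intro y hy y' hy'
  by_contra hne
  have h1 := L1 y y' hne
  rw [(mem_filter.1 hy).2, (mem_filter.1 hy').2, inter_self, hS] at h1
  omega

-- (hpair)
lemma hpair (L2 : ∀ S : Finset (Fin 7), S.card = 2 →
    ((univ : Finset (Fin 30)).filter fun y => colE E y ⊆ S).card ≤ 4) : ∀ i j : Fin 7, i ≠ j → c ∅ + c {i} + c {j} + c {i,j} ≤ 4 := by
  intro i j hij
  have hW := L2 {i,j} (card_pair hij)
  have hij2 : ({i,j} : Finset (Fin 7)).card = 2 := card_pair hij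
  have hne0i : (∅ : Finset (Fin 7)) ≠ {i} := (singleton_ne_empty i).symm
  have hne0j : (∅ : Finset (Fin 7)) ≠ {j} := (singleton_ne_empty j).symm
  have hne0ij : (∅ : Finset (Fin 7)) ≠ {i,j} := by
    intro h; rw [← h] at hij2; simp at hij2
  have hneij' : ({i} : Finset (Fin 7)) ≠ {j} := by
    simp [Finset.singleton_injective.ne_iff]
    exact hij
  have hneiij : ({i} : Finset (Fin 7)) ≠ ({i,j} : Finset (Fin 7)) := by
    intro h; rw [← h] at hij2; simp at hij2
  have hnejij : ({j} : Finset (Fin 7)) ≠ ({i,j} : Finset (Fin 7)) := by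
    intro h; rw [← h] at hij2; simp at hij2
  set f0 := (univ : Finset (Fin 30)).filter fun y => colE E y = ∅ with hf0
  set f1 := (univ : Finset (Fin 30)).filter fun y => colE E y = {i} with hf1
  set f2 := (univ : Finset (Fin 30)).filter fun y => colE E y = {j} with hf2
  set f3 := (univ : Finset (Fin 30)).filter fun y => colE E y = {i,j} with hf3
  have d01 : Disjoint f0 f1 := by
    rw [disjoint_left]; intro y h0 h1
    exact hne0i ((mem_filter.1 h0).2.symm.trans (mem_filter.1 h1).2)
  have d02 : Disjoint (f0 ∪ f1) f2 := by
    rw [disjoint_left]; intro y h0 h1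
    rcases mem_union.1 h0 with h | h
    · exact hne0j ((mem_filter.1 h).2.symm.trans (mem_filter.1 h1).2)
    · exact hneij' ((mem_filter.1 h).2.symm.trans (mem_filter.1 h1).2)
  have d03 : Disjoint (f0 ∪ f1 ∪ f2) f3 := by
    rw [disjoint_left]; intro y h0 h1
    rcases mem_union.1 h0 with h | h
    · rcases mem_union.1 h with h' | h'
      · exact hne0ij ((mem_filter.1 h').2.symm.trans (mem_filter.1 h1).2)
      · exact hneiij ((mem_filter.1 h').2.symm.trans (mem_filter.1 h1).2)
    · exact hnejij ((mem_filter.1 h).2.symm.trans (mem_filter.1 h1).2)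
  have hsub : f0 ∪ f1 ∪ f2 ∪ f3 ⊆ (univ : Finset (Fin 30)).filter fun y => colE E y ⊆ {i,j} := by
    intro y hy
    simp only [mem_union, hf0, hf1, hf2, hf3, mem_filter, mem_univ, true_and] at hy ⊢
    rcases hy with ((h | h) | h) | h <;> simp [h]
  calc c ∅ + c {i} + c {j} + c {i,j}
      = (f0 ∪ f1 ∪ f2 ∪ f3).card := by
        simp only [cF]
        rw [card_union_of_disjoint d03, card_union_of_disjoint d02, card_union_of_disjoint d01]
    _ ≤ _ := card_le_card hsub
    _ ≤ 4 := hW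

end main2

section main3
variable (E : Finset (Fin 7 × Fin 30))
local notation "c" => cF E

-- partition of the 30 columns by degree
lemma hsum :
    cF E ∅ + ((univ : Finset (Fin 30)).filter fun y => (colE E y).card = 1).card
      + ((univ : Finset (Fin 30)).filter fun y => (colE E y).card = 2).card
      + ((univ : Finset (Fin 30)).filter fun y => 3 ≤ (colE E y).card).card = 30 := by
  have hfib := card_eq_sum_card_fiberwise (f := fun y => min (colE E y).card 3)
    (s := (univ : Finset (Fin 30))) (t := ({0,1,2,3} : Finset ℕ))
    (by intro x _; simp only [mem_coe, mem_insert, mem_singleton]; omega)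
  have h30 : ((univ : Finset (Fin 30))).card = 30 := by simp
  rw [h30] at hfib
  have e0 : ((univ : Finset (Fin 30)).filter fun y => min (colE E y).card 3 = 0)
      = (univ : Finset (Fin 30)).filter fun y => colE E y = ∅ := by
    apply filter_congr; intro y _
    rw [← Finset.card_eq_zero]
    constructor <;> (intro h; omega)
  have e1 : ((univ : Finset (Fin 30)).filter fun y => min (colE E y).card 3 = 1)
      = (univ : Finset (Fin 30)).filter fun y => (colE E y).card = 1 := by
    apply filter_congr; intro y _; constructor <;> (intro h; omega)
  have e2 : ((univ : Finset (Fin 30)).filter fun y => min (colE E y).card 3 = 2)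
      = (univ : Finset (Fin 30)).filter fun y => (colE E y).card = 2 := by
    apply filter_congr; intro y _; constructor <;> (intro h; omega)
  have e3 : ((univ : Finset (Fin 30)).filter fun y => min (colE E y).card 3 = 3)
      = (univ : Finset (Fin 30)).filter fun y => 3 ≤ (colE E y).card := by
    apply filter_congr; intro y _; constructor <;> (intro h; omega)
  rw [show ({0,1,2,3} : Finset ℕ) = insert 0 (insert 1 (insert 2 {3})) from rfl] at hfib
  rw [sum_insert (by decide), sum_insert (by decide), sum_insert (by decide),
    sum_singleton] at hfib
  rw [e0, e1, e2, e3] at hfib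
  simp only [cF]
  omega

-- B = ∑ b i
lemma hB : ((univ : Finset (Fin 30)).filter fun y => (colE E y).card = 1).card
    = ∑ i : Fin 7, cF E {i} := by
  have hfib := card_eq_sum_card_fiberwise (f := colE E)
    (s := (univ : Finset (Fin 30)).filter fun y => (colE E y).card = 1)
    (t := (univ : Finset (Fin 7)).image fun i => ({i} : Finset (Fin 7)))
    (by
      intro y hy
      obtain ⟨i, hi⟩ := Finset.card_eq_one.1 (mem_filter.1 hy).2
      exact mem_image.2 ⟨i, mem_univ _, hi.symm⟩)
  rw [hfib, sum_image (by intro i _ j _ h; exact singleton_injective h)]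
  apply sum_congr rfl
  intro i _
  rw [filter_filter]
  congr 1
  apply filter_congr
  intro y _
  constructor
  · rintro ⟨-, h⟩; exact h
  · intro h; exact ⟨by rw [h]; simp, h⟩

-- e2 = sum of c over 2-subsets
lemma he2sum : ((univ : Finset (Fin 30)).filter fun y => (colE E y).card = 2).card
    = ∑ S ∈ powersetCard 2 (univ : Finset (Fin 7)), cF E S := by
  have hfib := card_eq_sum_card_fiberwise (f := colE E)
    (s := (univ : Finset (Fin 30)).filter fun y => (colE E y).card = 2)
    (t := powersetCard 2 (univ : Finset (Fin 7)))
    (by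
      intro y hy
      exact mem_powersetCard.2 ⟨subset_univ _, (mem_filter.1 hy).2⟩)
  rw [hfib]
  apply sum_congr rfl
  intro S hS
  rw [filter_filter]
  congr 1
  apply filter_congr
  intro y _
  constructor
  · rintro ⟨-, h⟩; exact h
  · intro h; exact ⟨by rw [h]; exact (mem_powersetCard.1 hS).2, h⟩

-- bound via blocked pairs
lemma he2Q (Q : Finset (Finset (Fin 7))) (hQ : Q ⊆ powersetCard 2 (univ : Finset (Fin 7)))
    (hc1' : ∀ S : Finset (Fin 7), S.card = 2 → cF E S ≤ 1)
    (h0 : ∀ S ∈ Q, cF E S = 0) :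
    ((univ : Finset (Fin 30)).filter fun y => (colE E y).card = 2).card + Q.card ≤ 21 := by
  rw [he2sum]
  have hsplit := Finset.sum_sdiff (f := cF E) hQ
  have hzero : ∑ S ∈ Q, cF E S = 0 := Finset.sum_eq_zero h0
  have hbound : ∑ S ∈ (powersetCard 2 (univ : Finset (Fin 7))) \ Q, cF E S
      ≤ ((powersetCard 2 (univ : Finset (Fin 7))) \ Q).card * 1 := by
    have := Finset.sum_le_card_nsmul ((powersetCard 2 (univ : Finset (Fin 7))) \ Q) (cF E) 1
      (by
        intro S hS
        exact hc1' S (mem_powersetCard.1 (mem_sdiff.1 hS).1).2)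
    simpa using this
  have hcard : ((powersetCard 2 (univ : Finset (Fin 7))) \ Q).card + Q.card
      = (powersetCard 2 (univ : Finset (Fin 7))).card := card_sdiff_add_card_eq_card hQ
  have h21 : (powersetCard 2 (univ : Finset (Fin 7))).card = 21 := by
    rw [card_powersetCard]; simp; decide
  omega

-- e2 + 3 E3 ≤ 21
lemma he23
    (L1 : ∀ y₁ y₂ : Fin 30, y₁ ≠ y₂ → ((colE E y₁) ∩ (colE E y₂)).card ≤ 1) :
    ((univ : Finset (Fin 30)).filter fun y => (colE E y).card = 2).card
      + 3 * ((univ : Finset (Fin 30)).filter fun y => 3 ≤ (colE E y).card).card ≤ 21 := by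
  set P2 := powersetCard 2 (univ : Finset (Fin 7)) with hP2
  -- each pair of rows lies in at most one column
  have hu : ∀ P ∈ P2, ((univ : Finset (Fin 30)).filter fun y => P ⊆ colE E y).card ≤ 1 := by
    intro P hP
    rw [card_le_one]
    intro y hy y' hy'
    by_contra hne
    have h1 := L1 y y' hne
    have hPsub : P ⊆ colE E y ∩ colE E y' :=
      subset_inter (mem_filter.1 hy).2 (mem_filter.1 hy').2
    have := card_le_card hPsub
    rw [(mem_powersetCard.1 hP).2] at this
    omega
  have hsum21 : ∑ P ∈ P2, ((univ : Finset (Fin 30)).filter fun y => P ⊆ colE E y).card ≤ 21 := by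
    have := Finset.sum_le_card_nsmul P2 _ 1 hu
    have hc : P2.card = 21 := by rw [hP2, card_powersetCard]; simp; decide
    simpa [hc] using this
  -- swap the double count
  have hswap : ∑ P ∈ P2, ((univ : Finset (Fin 30)).filter fun y => P ⊆ colE E y).card
      = ∑ y : Fin 30, ((colE E y).card.choose 2) := by
    have h1 : ∀ P, ((univ : Finset (Fin 30)).filter fun y => P ⊆ colE E y).card
        = ∑ y : Fin 30, if P ⊆ colE E y then 1 else 0 := by
      intro P; rw [Finset.card_filter]
    simp only [h1]
    rw [Finset.sum_comm]
    apply sum_congr rfl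
    intro y _
    have : ∑ P ∈ P2, (if P ⊆ colE E y then 1 else 0)
        = (P2.filter fun P => P ⊆ colE E y).card := by
      rw [Finset.card_filter]
    rw [this]
    have hps : P2.filter (fun P => P ⊆ colE E y) = powersetCard 2 (colE E y) := by
      ext P
      simp only [hP2, mem_filter, mem_powersetCard]
      constructor
      · rintro ⟨⟨-, h2⟩, hsub⟩; exact ⟨hsub, h2⟩
      · rintro ⟨hsub, h2⟩; exact ⟨⟨subset_univ _, h2⟩, hsub⟩
    rw [hps, card_powersetCard]
  rw [hswap] at hsum21
  -- lower bound the sum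
  set f2 := (univ : Finset (Fin 30)).filter fun y => (colE E y).card = 2 with hf2
  set f3 := (univ : Finset (Fin 30)).filter fun y => 3 ≤ (colE E y).card with hf3
  have hdisj : Disjoint f2 f3 := by
    rw [disjoint_left]
    intro y h2 h3
    have := (mem_filter.1 h2).2
    have := (mem_filter.1 h3).2
    omega
  have hsub : f2 ∪ f3 ⊆ (univ : Finset (Fin 30)) := subset_univ _
  have hlow : f2.card + 3 * f3.card ≤ ∑ y : Fin 30, ((colE E y).card.choose 2) := by
    calc f2.card + 3 * f3.card
        = f2.card * 1 + f3.card * 3 := by ring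
      _ ≤ (∑ y ∈ f2, ((colE E y).card.choose 2)) + ∑ y ∈ f3, ((colE E y).card.choose 2) := by
          gcongr ?_ + ?_
          · have := Finset.card_nsmul_le_sum f2 (fun y => ((colE E y).card.choose 2)) 1
              (by intro y hy; rw [(mem_filter.1 hy).2]; decide)
            simpa using this
          · have := Finset.card_nsmul_le_sum f3 (fun y => ((colE E y).card.choose 2)) 3
              (by
                intro y hy
                have h3 := (mem_filter.1 hy).2
                calc 3 = Nat.choose 3 2 := by decide
                  _ ≤ _ := Nat.choose_le_choose 2 h3)
            simpa [mul_comm] using this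
      _ = ∑ y ∈ f2 ∪ f3, ((colE E y).card.choose 2) := (sum_union hdisj).symm
      _ ≤ _ := sum_le_sum_of_subset hsub
  omega

-- the main contradiction
lemma endgame
    (L1 : ∀ y₁ y₂ : Fin 30, y₁ ≠ y₂ → ((colE E y₁) ∩ (colE E y₂)).card ≤ 1)
    (L2 : ∀ S : Finset (Fin 7), S.card = 2 →
      ((univ : Finset (Fin 30)).filter fun y => colE E y ⊆ S).card ≤ 4) : False := by
  have hp := hpair E L2
  have h1 := hc1 E L1
  have hQ := he2Q E
  have h23 := he23 E L1
  have hs := hsum E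
  have hBsum := hB E
  have hchooseFin : ∀ n : Fin 8, (2 ≤ n.1 → 3 * n.1 ≤ 2 * (n.1.choose 2) + 4 ∧ 1 ≤ n.1.choose 2)
      := by decide
  set a := cF E ∅ with ha
  set B := ((univ : Finset (Fin 30)).filter fun y => (colE E y).card = 1).card with hBdef
  set e2 := ((univ : Finset (Fin 30)).filter fun y => (colE E y).card = 2).card with he2def
  set E3 := ((univ : Finset (Fin 30)).filter fun y => 3 ≤ (colE E y).card).card with hE3def
  have he2top : e2 ≤ 21 := by
    have := hQ ∅ (empty_subset _) h1 (by simp)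
    simpa using this
  set K := (univ : Finset (Fin 7)).filter (fun i => 2 ≤ cF E {i}) with hK
  have hk7 : K.card ≤ 7 := by
    calc K.card ≤ (univ : Finset (Fin 7)).card := card_filter_le _ _
      _ = 7 := by simp
  rcases Nat.lt_or_ge K.card 2 with hklt | hkge
  · rcases Nat.lt_or_ge K.card 1 with hk0 | hk1
    · -- K.card = 0 : every row has weight ≤ 1
      have hKempty : K = ∅ := card_eq_zero.1 (by omega)
      have hall : ∀ i, cF E {i} ≤ 1 := by
        intro i
        by_contra hc
        have : i ∈ K := mem_filter.2 ⟨mem_univ _, by omega⟩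
        rw [hKempty] at this
        exact absurd this (notMem_empty _)
      set T := (univ : Finset (Fin 7)).filter (fun i => cF E {i} = 1) with hT
      have htB : B = T.card := by
        rw [hBsum]
        rw [← Finset.sum_filter_add_sum_filter_not (univ : Finset (Fin 7))
          (fun i => cF E {i} = 1) (fun i => cF E {i})]
        have h1s : ∑ i ∈ T, cF E {i} = T.card := by
          rw [Finset.card_eq_sum_ones T]
          exact sum_congr rfl (fun i hi => (mem_filter.1 hi).2)
        have h0s : ∑ i ∈ (univ : Finset (Fin 7)).filter (fun i => ¬ cF E {i} = 1),
            cF E {i} = 0 := by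
          apply Finset.sum_eq_zero
          intro i hi
          have h1' := hall i
          have h2' := (mem_filter.1 hi).2
          omega
        rw [h1s, h0s]
        omega
      have ht7 : T.card ≤ 7 := by
        calc T.card ≤ (univ : Finset (Fin 7)).card := card_filter_le _ _
          _ = 7 := by simp
      have ha4 : a ≤ 4 := by
        have := hp 0 1 (by decide)
        omega
      have hcases : a ≤ 1 ∨ a = 2 ∨ a = 3 ∨ a = 4 := by omega
      rcases hcases with h | h | h | h
      · omega
      · -- a = 2 : pairs of weight-1 rows are blocked
        have hQc := hQ (powersetCard 2 T) (powersetCard_mono (subset_univ _)) h1 (by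
          intro S hS
          obtain ⟨hsub, hcard⟩ := mem_powersetCard.1 hS
          obtain ⟨i, j, hij, rfl⟩ := card_eq_two.1 hcard
          have hbi := (mem_filter.1 (hsub (by simp : i ∈ ({i,j} : Finset (Fin 7))))).2
          have hbj := (mem_filter.1 (hsub (by simp : j ∈ ({i,j} : Finset (Fin 7))))).2
          have := hp i j hij
          omega)
        rw [card_powersetCard] at hQc
        rcases Nat.lt_or_ge T.card 2 with htlt | htge
        · omega
        · have hch : 1 ≤ (T.card).choose 2 := by
            have := (hchooseFin ⟨T.card, by omega⟩ (by simpa using htge)).2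
            simpa using this
          omega
      · -- a = 3 : at most one weight-1 row
        have ht1 : T.card ≤ 1 := by
          by_contra hc
          obtain ⟨i, hi, j, hj, hij⟩ := Finset.one_lt_card.1 (show 1 < T.card by omega)
          have hbi := (mem_filter.1 hi).2
          have hbj := (mem_filter.1 hj).2
          have := hp i j hij
          omega
        omega
      · -- a = 4 : all rows weight 0, all pairs blocked
        have hT0 : T.card = 0 := by
          rw [Finset.card_eq_zero, Finset.filter_eq_empty_iff]
          intro i _
          obtain ⟨j, hj⟩ := exists_ne i
          have := hp i j (Ne.symm hj)
          omega
        have hQc := hQ (powersetCard 2 (univ : Finset (Fin 7))) (Subset.refl _) h1 (by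
          intro S hS
          obtain ⟨hsub, hcard⟩ := mem_powersetCard.1 hS
          obtain ⟨i, j, hij, rfl⟩ := card_eq_two.1 hcard
          have hbi := hall i
          have hbj := hall j
          have := hp i j hij
          omega)
        rw [card_powersetCard] at hQc
        have h72 : ((univ : Finset (Fin 7)).card).choose 2 = 21 := by
          rw [card_univ]; decide
        rw [h72] at hQc
        omega
    · -- K.card = 1
      obtain ⟨i0, hKi0⟩ := card_eq_one.1 (show K.card = 1 by omega)
      have hm2 : 2 ≤ cF E {i0} := by
        have : i0 ∈ K := by rw [hKi0]; exact mem_singleton_self _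
        exact (mem_filter.1 this).2
      have hoth : ∀ j, j ≠ i0 → cF E {j} ≤ 1 := by
        intro j hj
        by_contra hc
        have : j ∈ K := mem_filter.2 ⟨mem_univ _, by omega⟩
        rw [hKi0, mem_singleton] at this
        exact hj this
      have ham : a + cF E {i0} ≤ 4 := by
        obtain ⟨j, hj⟩ := exists_ne i0
        have := hp i0 j (Ne.symm hj)
        omega
      set T := ((univ : Finset (Fin 7)).erase i0).filter (fun j => cF E {j} = 1) with hT
      have htB : B = cF E {i0} + T.card := by
        rw [hBsum]
        rw [← Finset.add_sum_erase (univ : Finset (Fin 7)) (fun i => cF E {i}) (mem_univ i0)]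
        have herase : ∑ j ∈ (univ : Finset (Fin 7)).erase i0, cF E {j} = T.card := by
          rw [← Finset.sum_filter_add_sum_filter_not ((univ : Finset (Fin 7)).erase i0)
            (fun j => cF E {j} = 1) (fun j => cF E {j})]
          have h1s : ∑ j ∈ T, cF E {j} = T.card := by
            rw [Finset.card_eq_sum_ones T]
            exact sum_congr rfl (fun j hj => (mem_filter.1 hj).2)
          have h0s : ∑ j ∈ ((univ : Finset (Fin 7)).erase i0).filter
              (fun j => ¬ cF E {j} = 1), cF E {j} = 0 := by
            apply Finset.sum_eq_zero
            intro j hj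
            have hj1 := mem_filter.1 hj
            have h1' := hoth j (mem_erase.1 hj1.1).1
            have h2' := hj1.2
            omega
          rw [h1s, h0s]
          omega
        rw [herase]
      have ht6 : T.card ≤ 6 := by
        calc T.card ≤ ((univ : Finset (Fin 7)).erase i0).card := card_filter_le _ _
          _ = 6 := by rw [card_erase_of_mem (mem_univ _), card_univ, Fintype.card_fin]
      have hinj : ∀ j ∈ ((univ : Finset (Fin 7)).erase i0),
          ∀ j' ∈ ((univ : Finset (Fin 7)).erase i0),
          ({i0, j} : Finset (Fin 7)) = {i0, j'} → j = j' := by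
        intro j hj j' hj' heq
        have hjm : j ∈ ({i0, j'} : Finset (Fin 7)) := by rw [← heq]; simp
        rcases mem_insert.1 hjm with h | h
        · exact absurd h (mem_erase.1 hj).1
        · exact mem_singleton.1 h
      have hcases : a + cF E {i0} ≤ 2 ∨ a + cF E {i0} = 3 ∨ a + cF E {i0} = 4 := by omega
      rcases hcases with h | h | h
      · omega
      · -- a + b i0 = 3 : pairs {i0, j} with b j = 1 are blocked
        have hQc := hQ (T.image (fun j => ({i0, j} : Finset (Fin 7)))) (by
          intro S hS
          obtain ⟨j, hj, rfl⟩ := mem_image.1 hS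
          refine mem_powersetCard.2 ⟨subset_univ _, card_pair ?_⟩
          exact Ne.symm (mem_erase.1 (mem_filter.1 hj).1).1) h1 (by
          intro S hS
          obtain ⟨j, hj, rfl⟩ := mem_image.1 hS
          have hbj := (mem_filter.1 hj).2
          have hji0 := (mem_erase.1 (mem_filter.1 hj).1).1
          have := hp i0 j (Ne.symm hji0)
          omega)
        have hcardQ : (T.image (fun j => ({i0, j} : Finset (Fin 7)))).card = T.card := by
          apply card_image_of_injOn
          intro j hj j' hj' heq
          exact hinj j (mem_filter.1 hj).1 j' (mem_filter.1 hj').1 heq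
        rw [hcardQ] at hQc
        omega
      · -- a + b i0 = 4
        have ht0 : T.card = 0 := by
          rw [Finset.card_eq_zero, Finset.filter_eq_empty_iff]
          intro j hj hbj
          have := hp i0 j (Ne.symm (mem_erase.1 hj).1)
          omega
        have hQc := hQ (((univ : Finset (Fin 7)).erase i0).image
            (fun j => ({i0, j} : Finset (Fin 7)))) (by
          intro S hS
          obtain ⟨j, hj, rfl⟩ := mem_image.1 hS
          refine mem_powersetCard.2 ⟨subset_univ _, card_pair ?_⟩
          exact Ne.symm (mem_erase.1 hj).1) h1 (by
          intro S hS
          obtain ⟨j, hj, rfl⟩ := mem_image.1 hS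
          have hji0 := (mem_erase.1 hj).1
          have hbj := hoth j hji0
          have := hp i0 j (Ne.symm hji0)
          omega)
        have hcardQ : ((((univ : Finset (Fin 7)).erase i0)).image
            (fun j => ({i0, j} : Finset (Fin 7)))).card = 6 := by
          rw [card_image_of_injOn hinj, card_erase_of_mem (mem_univ _), card_univ,
            Fintype.card_fin]
        rw [hcardQ] at hQc
        omega
  · -- K.card ≥ 2
    obtain ⟨i, hi, j, hj, hij⟩ := Finset.one_lt_card.1 (show 1 < K.card by omega)
    have hbi : 2 ≤ cF E {i} := (mem_filter.1 hi).2
    have hbj : 2 ≤ cF E {j} := (mem_filter.1 hj).2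
    have ha0 : a = 0 := by
      have := hp i j hij
      omega
    have hble : ∀ i' ∈ K, cF E {i'} ≤ 2 := by
      intro i' hi'
      rcases eq_or_ne i i' with rfl | hne
      · have h4 := hp i j hij
        omega
      · have h4 := hp i' i (Ne.symm hne)
        omega
    have hBle : B ≤ 2 * K.card + (7 - K.card) := by
      rw [hBsum]
      rw [← Finset.sum_filter_add_sum_filter_not (univ : Finset (Fin 7))
        (fun i => 2 ≤ cF E {i}) (fun i => cF E {i}), ← hK]
      have h2s : ∑ i' ∈ K, cF E {i'} ≤ K.card * 2 := by
        have := Finset.sum_le_card_nsmul K (fun i' => cF E {i'}) 2 (fun i' hi' => hble i' hi')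
        simpa using this
      have h1s : ∑ i' ∈ (univ : Finset (Fin 7)).filter (fun i => ¬ 2 ≤ cF E {i}), cF E {i'}
          ≤ ((univ : Finset (Fin 7)).filter (fun i => ¬ 2 ≤ cF E {i})).card * 1 := by
        have := Finset.sum_le_card_nsmul
          ((univ : Finset (Fin 7)).filter (fun i => ¬ 2 ≤ cF E {i}))
          (fun i' => cF E {i'}) 1 (by
            intro i' hi'
            have h5 := (mem_filter.1 hi').2
            show cF E {i'} ≤ 1
            omega)
        simpa using this
      have hcards : K.card + ((univ : Finset (Fin 7)).filter (fun i => ¬ 2 ≤ cF E {i})).card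
          = 7 := by
        rw [hK, Finset.card_filter_add_card_filter_not]
        simp
      omega
    have hQc := hQ (powersetCard 2 K) (powersetCard_mono (subset_univ _)) h1 (by
      intro S hS
      obtain ⟨hsub, hcard⟩ := mem_powersetCard.1 hS
      obtain ⟨i', j', hij', rfl⟩ := card_eq_two.1 hcard
      have hi' : 2 ≤ cF E {i'} :=
        (mem_filter.1 (hsub (by simp : i' ∈ ({i', j'} : Finset (Fin 7))))).2
      have hj' : 2 ≤ cF E {j'} :=
        (mem_filter.1 (hsub (by simp : j' ∈ ({i', j'} : Finset (Fin 7))))).2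
      have := hp i' j' hij'
      omega)
    rw [card_powersetCard] at hQc
    have hch : 3 * K.card ≤ 2 * (K.card).choose 2 + 4 := by
      have := (hchooseFin ⟨K.card, by omega⟩ (by simpa using hkge)).1
      simpa using this
    omega

end main3

def colsList : List (Finset (Fin 8)) :=
  [{0,1},{0,2},{0,3},{0,4},{0,5},{0,6},{0,7},
   {1,2},{1,3},{1,4},{1,5},{1,6},{1,7},
   {2,3},{2,4},{2,5},{2,6},{2,7},
   {3,4},{3,5},{3,6},{3,7},
   {4,5},{4,6},{4,7},
   {5,6},{5,7},
   {6,7},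
   {0}]

def cols8 (y : Fin 29) : Finset (Fin 8) := colsList.get (Fin.cast (by rfl) y)

set_option maxRecDepth 10000 in
lemma D1 : ∀ y₁ y₂ : Fin 29, y₁ ≠ y₂ → (cols8 y₁ ∩ cols8 y₂).card ≤ 1 := by decide

set_option maxRecDepth 10000 in
lemma D2 : ∀ S : Finset (Fin 8), S.card = 3 →
    ((univ : Finset (Fin 29)).filter fun y => cols8 y ⊆ S).card ≤ 4 := by decide


theorem upper7 (E : Finset (Fin 7 × Fin 30)) :
    bContains 2 2 E ∨ bContains 5 5 (bCompl E) := by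
  by_contra hcon
  push_neg at hcon
  obtain ⟨h22, h55⟩ := hcon
  apply endgame E
  · intro y₁ y₂ hy
    by_contra hc
    exact h22 ((bContains_22_iff E).2 ⟨y₁, y₂, hy, by omega⟩)
  · intro S hS
    by_contra hc
    apply h55
    refine (coK55_iff E).2 ⟨S, ?_, by omega⟩
    rw [card_compl, hS]
    rfl

def E29 : Finset (Fin 8 × Fin 29) :=
  Finset.univ.filter fun p => p.1 ∈ cols8 p.2

lemma colE_E29 (y : Fin 29) : colE E29 y = cols8 y := by
  ext x
  simp [E29, colE]

lemma no22 : ¬ bContains 2 2 E29 := by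
  rw [bContains_22_iff]
  rintro ⟨y₁, y₂, hy, h2⟩
  rw [colE_E29, colE_E29] at h2
  have := D1 y₁ y₂ hy
  omega

lemma no55 : ¬ bContains 5 5 (bCompl E29) := by
  rw [coK55_iff]
  rintro ⟨S, hS, h5⟩
  have hS8 : S.card ≤ 8 := by
    calc S.card ≤ (Finset.univ : Finset (Fin 8)).card := card_le_card (subset_univ _)
      _ = 8 := by simp
  have hcc : Sᶜ.card = 8 - S.card := by rw [card_compl]; rfl
  have hS3 : S.card = 3 := by omega
  have heq : ((univ : Finset (Fin 29)).filter fun y => colE E29 y ⊆ S)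
      = ((univ : Finset (Fin 29)).filter fun y => cols8 y ⊆ S) := by
    apply filter_congr
    intro y _
    rw [colE_E29]
  rw [heq] at h5
  have := D2 S hS3
  omega

theorem stmt_8 :
    IsLeast {n : ℕ | 0 < n ∧ ∀ E : Finset (Fin 7 × Fin n),
      bContains 2 2 E ∨ bContains 5 5 (bCompl E)} 30 ∧
    IsLeast {n : ℕ | 0 < n ∧ ∀ E : Finset (Fin 8 × Fin n),
      bContains 2 2 E ∨ bContains 5 5 (bCompl E)} 30 := by
  have upper8 : ∀ E : Finset (Fin 8 × Fin 30), bContains 2 2 E ∨ bContains 5 5 (bCompl E) := by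
    intro E8
    rcases upper7 ((Finset.univ : Finset (Fin 7 × Fin 30)).filter fun p =>
        ((Fin.castLEEmb (by norm_num : 7 ≤ 8)) p.1,
         (Fin.castLEEmb (le_refl 30)) p.2) ∈ E8) with h | h
    · exact Or.inl (transfer_22 _ _ _ h)
    · exact Or.inr (transfer_co _ _ _ h)
  have lower : ∀ (m : ℕ) (φ : Fin m ↪ Fin 8), ∀ n : ℕ, n ≤ 29 →
      ¬ (∀ E : Finset (Fin m × Fin n), bContains 2 2 E ∨ bContains 5 5 (bCompl E)) := by
    intro m φ n hn hall
    rcases hall ((Finset.univ : Finset (Fin m × Fin n)).filter fun p =>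
        (φ p.1, (Fin.castLEEmb hn) p.2) ∈ E29) with h | h
    · exact no22 (transfer_22 _ _ _ h)
    · exact no55 (transfer_co _ _ _ h)
  constructor
  · constructor
    · exact ⟨by norm_num, upper7⟩
    · intro n hn
      by_contra hlt
      push_neg at hlt
      exact lower 7 (Fin.castLEEmb (by norm_num : 7 ≤ 8)) n (by omega) hn.2
  · constructor
    · exact ⟨by norm_num, upper8⟩
    · intro n hn
      by_contra hlt
      push_neg at hlt
      exact lower 8 (Fin.castLEEmb (le_refl 8)) n (by omega) hn.2
end
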